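/- Every (p+1)-centered coloring of a graph G is a low tree-depth decomposition with parameter p: any subset I of at most p color classes induces a subgraph with tree-depth at most |I|. -/

import Mathlib

/-- A rooted forest on vertex type `V`, given by a parent function and a depth
function (depth 0 = roots). -/
structure RootedForest (V : Type*) where
  parent : V → V
  depth : V → ℕ
  root_iff : ∀ v, parent v = v ↔ depth v = 0
  depth_parent : ∀ v, depth v ≠ 0 → depth (parent v) + 1 = depth v

namespace RootedForest

variable {V : Type*}

/-- The forest has height at most `h` (counted in vertices on root-to-leaf paths). -/
def HeightLE (F : RootedForest V) (h : ℕ) : Prop := ∀ v, F.depth v + 1 ≤ h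

/-- `y` is an ancestor of `x` (possibly `y = x`). -/
def Ancestor (F : RootedForest V) (y x : V) : Prop := ∃ j, F.parent^[j] x = y

/-- Adjacency in the closure of the forest: distinct comparable vertices. -/
def ClosureAdj (F : RootedForest V) (x y : V) : Prop :=
  x ≠ y ∧ (F.Ancestor x y ∨ F.Ancestor y x)

end RootedForest

/-- The graph `G` has tree-depth at most `h`: it is a subgraph of the closure of a
rooted forest of height at most `h`. -/
def TreedepthLE {V : Type*} (G : SimpleGraph V) (h : ℕ) : Prop :=
  ∃ F : RootedForest V, F.HeightLE h ∧ ∀ x y, G.Adj x y → F.ClosureAdj x y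

/-- The tree-depth of a graph. -/
noncomputable def treedepth {V : Type*} (G : SimpleGraph V) : ℕ :=
  sInf {h | TreedepthLE G h}

/-- `γ` is a `p`-centered coloring of `G`: every connected subgraph either has a
color appearing exactly once or receives at least `p` colors. -/
def IsPCentered {V C : Type*} (G : SimpleGraph V) (γ : V → C) (p : ℕ) : Prop :=
  ∀ H : G.Subgraph, H.Connected →
    (∃ c, {v ∈ H.verts | γ v = c}.ncard = 1) ∨ p ≤ (γ '' H.verts).ncard

/-- `γ` is a centered coloring of `G`: every connected subgraph has a color
appearing exactly once. -/
def IsCentered {V C : Type*} (G : SimpleGraph V) (γ : V → C) : Prop :=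
  ∀ H : G.Subgraph, H.Connected → ∃ c, {v ∈ H.verts | γ v = c}.ncard = 1


namespace RootedForest
variable {V : Type*}

lemma depth_iterate (F : RootedForest V) :
    ∀ (j : ℕ) (v : V), j ≤ F.depth v → F.depth (F.parent^[j] v) + j = F.depth v
  | 0, v, _ => rfl
  | j+1, v, h => by
    have hv : F.depth v ≠ 0 := by omega
    have hp := F.depth_parent v hv
    rw [Function.iterate_succ_apply]
    have := depth_iterate F j (F.parent v) (by omega)
    omega

lemma iterate_of_depth_zero (F : RootedForest V) :
    ∀ (j : ℕ) (v : V), F.depth v = 0 → F.parent^[j] v = v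
  | 0, _, _ => rfl
  | j+1, v, h => by
    rw [Function.iterate_succ_apply, (F.root_iff v).2 h]
    exact iterate_of_depth_zero F j v h

lemma iterate_stab (F : RootedForest V) (v : V) {j : ℕ} (h : F.depth v ≤ j) :
    F.parent^[j] v = F.parent^[F.depth v] v := by
  obtain ⟨k, rfl⟩ := Nat.exists_eq_add_of_le h
  rw [Nat.add_comm, Function.iterate_add_apply]
  have h0 : F.depth (F.parent^[F.depth v] v) = 0 := by
    have := F.depth_iterate (F.depth v) v le_rfl
    omega
  exact F.iterate_of_depth_zero k _ h0

lemma reachable_iterate {G : SimpleGraph V} (F : RootedForest V)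
    (hre : ∀ w, G.Reachable w (F.parent w)) :
    ∀ (j : ℕ) (v : V), G.Reachable v (F.parent^[j] v)
  | 0, v => SimpleGraph.Reachable.refl v
  | j+1, v => by
    rw [Function.iterate_succ_apply]
    exact (hre v).trans (reachable_iterate F hre j (F.parent v))

end RootedForest

section Extend

variable {V : Type*} {A : Set V} [DecidablePred (· ∈ A)] (F' : RootedForest A) (rt : V → V)

def extParent (v : V) : V :=
  if h : v ∈ A then (if F'.depth ⟨v, h⟩ = 0 then rt v else (F'.parent ⟨v, h⟩).val) else v

def extDepth (v : V) : ℕ := if h : v ∈ A then F'.depth ⟨v, h⟩ + 1 else 0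

lemma extParent_of_not_mem {v : V} (h : v ∉ A) : extParent F' rt v = v := dif_neg h

lemma extParent_of_depth_zero {v : V} (h : v ∈ A) (h0 : F'.depth ⟨v, h⟩ = 0) :
    extParent F' rt v = rt v := by rw [extParent, dif_pos h, if_pos h0]

lemma extParent_of_depth_pos {v : V} (h : v ∈ A) (h0 : F'.depth ⟨v, h⟩ ≠ 0) :
    extParent F' rt v = (F'.parent ⟨v, h⟩).val := by rw [extParent, dif_pos h, if_neg h0]

lemma extDepth_of_mem {v : V} (h : v ∈ A) : extDepth F' v = F'.depth ⟨v, h⟩ + 1 := dif_pos h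

lemma extDepth_of_not_mem {v : V} (h : v ∉ A) : extDepth F' v = 0 := dif_neg h

lemma extDepth_coe (u : A) : extDepth F' u.val = F'.depth u + 1 := by
  rw [extDepth_of_mem F' u.2]

lemma extParent_coe_pos (u : A) (h0 : F'.depth u ≠ 0) :
    extParent F' rt u.val = (F'.parent u).val := by
  rw [extParent_of_depth_pos F' rt u.2 h0]

lemma extParent_coe_zero (u : A) (h0 : F'.depth u = 0) :
    extParent F' rt u.val = rt u.val := by
  rw [extParent_of_depth_zero F' rt u.2 h0]

/-- Extend a forest on `A` by hanging each tree of `F'` below the new roots `rt`. -/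
def extendForest (hrt : ∀ v ∈ A, rt v ∉ A) : RootedForest V where
  parent := extParent F' rt
  depth := extDepth F'
  root_iff v := by
    by_cases h : v ∈ A
    · rw [extDepth_of_mem F' h]
      constructor
      · intro he
        exfalso
        by_cases h0 : F'.depth ⟨v, h⟩ = 0
        · rw [extParent_of_depth_zero F' rt h h0] at he
          exact hrt v h (he.symm ▸ h)
        · rw [extParent_of_depth_pos F' rt h h0] at he
          exact h0 ((F'.root_iff _).1 (Subtype.ext he))
      · omega
    · rw [extParent_of_not_mem F' rt h, extDepth_of_not_mem F' h]
      simp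
  depth_parent v hv := by
    have h : v ∈ A := by
      by_contra h
      exact hv (extDepth_of_not_mem F' h)
    rw [extDepth_of_mem F' h] at hv ⊢
    by_cases h0 : F'.depth ⟨v, h⟩ = 0
    · rw [extParent_of_depth_zero F' rt h h0,
        extDepth_of_not_mem F' (hrt v h), h0]
    · rw [extParent_of_depth_pos F' rt h h0, extDepth_coe]
      have := F'.depth_parent ⟨v, h⟩ h0
      omega

variable (hrt : ∀ v ∈ A, rt v ∉ A)

lemma extendForest_chain {v : V} (h : v ∈ A) :
    ∀ j : ℕ, j ≤ F'.depth ⟨v, h⟩ →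
      (extendForest F' rt hrt).parent^[j] v = (F'.parent^[j] ⟨v, h⟩).val
  | 0, _ => rfl
  | j+1, hj => by
    rw [Function.iterate_succ_apply', Function.iterate_succ_apply',
      extendForest_chain h j (by omega)]
    set u : A := F'.parent^[j] ⟨v, h⟩ with hu
    have hdu : F'.depth u + j = F'.depth ⟨v, h⟩ := F'.depth_iterate j ⟨v, h⟩ (by omega)
    show extParent F' rt u.val = _
    rw [extParent_coe_pos F' rt u (by omega)]

lemma extendForest_top {v : V} (h : v ∈ A) :
    (extendForest F' rt hrt).parent^[F'.depth ⟨v, h⟩ + 1] v =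
      rt ((F'.parent^[F'.depth ⟨v, h⟩] ⟨v, h⟩).val) := by
  rw [Function.iterate_succ_apply', extendForest_chain F' rt hrt h _ le_rfl]
  set u : A := F'.parent^[F'.depth ⟨v, h⟩] ⟨v, h⟩ with hu
  have hdu : F'.depth u + F'.depth ⟨v, h⟩ = F'.depth ⟨v, h⟩ :=
    F'.depth_iterate _ ⟨v, h⟩ le_rfl
  show extParent F' rt u.val = _
  rw [extParent_coe_zero F' rt u (by omega)]

lemma extendForest_ancestor {x y : V} (hx : x ∈ A) (hy : y ∈ A)
    (ha : F'.Ancestor ⟨x, hx⟩ ⟨y, hy⟩) :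
    (extendForest F' rt hrt).Ancestor x y := by
  obtain ⟨j, hj⟩ := ha
  refine ⟨min j (F'.depth ⟨y, hy⟩), ?_⟩
  have hj' : F'.parent^[min j (F'.depth ⟨y, hy⟩)] ⟨y, hy⟩ = ⟨x, hx⟩ := by
    rcases le_total j (F'.depth ⟨y, hy⟩) with hle | hle
    · rwa [min_eq_left hle]
    · rw [min_eq_right hle, ← F'.iterate_stab ⟨y, hy⟩ hle]
      exact hj
  rw [extendForest_chain F' rt hrt hy _ (min_le_right _ _), hj']

end Extend

section Lift

open SimpleGraph

variable {V : Type*} {G : SimpleGraph V} {s : Set V}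

/-- A subgraph of the induced graph on `s`, as a subgraph of `G`. -/
def liftSubgraph (H' : (G.induce s).Subgraph) : G.Subgraph where
  verts := Subtype.val '' H'.verts
  Adj x y := ∃ (hx : x ∈ s) (hy : y ∈ s), H'.Adj ⟨x, hx⟩ ⟨y, hy⟩
  adj_sub := by
    rintro x y ⟨hx, hy, h⟩
    exact H'.adj_sub h
  edge_vert := by
    rintro x y ⟨hx, hy, h⟩
    exact ⟨⟨x, hx⟩, H'.edge_vert h, rfl⟩
  symm := by
    constructor
    rintro x y ⟨hx, hy, h⟩
    exact ⟨hy, hx, h.symm⟩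

lemma liftSubgraph_verts (H' : (G.induce s).Subgraph) :
    (liftSubgraph H').verts = Subtype.val '' H'.verts := rfl

lemma liftSubgraph_connected (H' : (G.induce s).Subgraph) (h : H'.Connected) :
    (liftSubgraph H').Connected := by
  rw [Subgraph.connected_iff'] at h ⊢
  have hf : ∀ u : H'.verts, u.val.val ∈ (liftSubgraph H').verts :=
    fun u => ⟨u.val, u.2, rfl⟩
  let f : H'.coe →g (liftSubgraph H').coe :=
    { toFun := fun u => ⟨u.val.val, hf u⟩
      map_rel' := by
        rintro ⟨⟨x, hx⟩, hx'⟩ ⟨⟨y, hy⟩, hy'⟩ hadj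
        exact ⟨hx, hy, hadj⟩ }
  refine h.map f ?_
  rintro ⟨x, u, hu, rfl⟩
  exact ⟨⟨u, hu⟩, rfl⟩

lemma lift_color_set {C : Type*} (γ : V → C) (H' : (G.induce s).Subgraph) (c : C) :
    {v ∈ (liftSubgraph H').verts | γ v = c} =
      Subtype.val '' {v ∈ H'.verts | γ v.val = c} := by
  ext x
  constructor
  · rintro ⟨⟨u, hu, rfl⟩, hγ⟩
    exact ⟨u, ⟨hu, hγ⟩, rfl⟩
  · rintro ⟨u, ⟨hu, hγ⟩, rfl⟩
    exact ⟨⟨u, hu, rfl⟩, hγ⟩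

lemma isCentered_induce {C : Type*} {γ : V → C} (hc : IsCentered G γ) (s : Set V) :
    IsCentered (G.induce s) (fun v => γ v.val) := by
  intro H' hH'
  obtain ⟨c, hc1⟩ := hc (liftSubgraph H') (liftSubgraph_connected H' hH')
  refine ⟨c, ?_⟩
  rw [lift_color_set γ H' c, Set.ncard_image_of_injective _ Subtype.val_injective] at hc1
  exact hc1

end Lift

section Component

open SimpleGraph

variable {V : Type*} {G : SimpleGraph V}

lemma reachable_of_mem_support :
    ∀ {u v w : V} (p : G.Walk u v), w ∈ p.support → G.Reachable u w := by
  intro u v w p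
  induction p with
  | nil =>
    intro h
    rw [Walk.support_nil, List.mem_singleton] at h
    exact h ▸ Reachable.refl _
  | cons h p ih =>
    intro hw
    rw [Walk.support_cons, List.mem_cons] at hw
    rcases hw with rfl | hw
    · exact Reachable.refl _
    · exact h.reachable.trans (ih hw)

lemma component_connected (v : V) : (G.induce {w | G.Reachable v w}).Connected := by
  refine induce_connected_of_patches v ?_ ?_
  · show G.Reachable v v
    exact Reachable.refl v
  intro w hw
  obtain ⟨p⟩ := hw
  refine ⟨{x | x ∈ p.support}, ?_, p.start_mem_support, p.end_mem_support, ?_⟩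
  · intro x hx
    exact reachable_of_mem_support p hx
  · exact (p.connected_induce_support).preconnected _ _

end Component

section Key

open SimpleGraph

universe u

lemma induce_reachable {V : Type*} {G : SimpleGraph V} {s : Set V} {u w : s}
    (h : (G.induce s).Reachable u w) : G.Reachable u.val w.val := by
  simpa using h.map (SimpleGraph.Embedding.induce s).toHom

lemma key_forest {C : Type*} :
    ∀ (n : ℕ) (V : Type u) [Fintype V] (G : SimpleGraph V) (γ : V → C),
      Fintype.card V ≤ n → IsCentered G γ →
      ∃ F : RootedForest V,
        (∀ v, G.Reachable v (F.parent v)) ∧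
        (∀ v, F.depth v + 1 ≤ (γ '' {w | G.Reachable v w}).ncard) ∧
        (∀ x y, G.Adj x y → F.ClosureAdj x y) := by
  intro n
  induction n with
  | zero =>
    intro V _ G γ hn _
    haveI : IsEmpty V := by
      rwa [← Fintype.card_eq_zero_iff, ← Nat.le_zero]
    exact ⟨⟨id, fun _ => 0, fun v => ⟨fun _ => rfl, fun _ => rfl⟩, fun v h => absurd rfl h⟩,
      fun v => isEmptyElim v, fun v => isEmptyElim v, fun x => isEmptyElim x⟩
  | succ n IH =>
    intro V _ G γ hn hc
    classical
    by_cases hV : IsEmpty V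
    · exact ⟨⟨id, fun _ => 0, fun v => ⟨fun _ => rfl, fun _ => rfl⟩, fun v h => absurd rfl h⟩,
        fun v => isEmptyElim v, fun v => isEmptyElim v, fun x => isEmptyElim x⟩
    rw [not_isEmpty_iff] at hV
    set S : V → Set V := fun v => {w | G.Reachable v w} with hS
    have hS_eq : ∀ {v w : V}, G.Reachable v w → S w = S v := by
      intro v w hvw
      ext u
      exact ⟨fun h => hvw.trans h, fun h => hvw.symm.trans h⟩
    have hcomp : ∀ v : V, ∃ r, r ∈ S v ∧ ∀ u ∈ S v, γ u = γ r → u = r := by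
      intro v
      have hconn : ((⊤ : G.Subgraph).induce (S v)).Connected := by
        rw [← SimpleGraph.connected_induce_iff]
        exact component_connected v
      obtain ⟨c, hc1⟩ := hc _ hconn
      obtain ⟨r, hr⟩ := Set.ncard_eq_one.1 hc1
      have hrr : r ∈ S v ∧ γ r = c := by
        have : r ∈ {u | u ∈ ((⊤ : G.Subgraph).induce (S v)).verts ∧ γ u = c} := by
          rw [hr]; rfl
        exact this
      refine ⟨r, hrr.1, fun u hu hγu => ?_⟩
      have : u ∈ ({r} : Set V) := by
        rw [← hr]
        exact ⟨hu, hγu.trans hrr.2⟩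
      exact this
    set rt0 : Set V → V := fun T =>
      if h : ∃ r, r ∈ T ∧ ∀ u ∈ T, γ u = γ r → u = r then h.choose else hV.some with hrt0
    set root : V → V := fun v => rt0 (S v) with hroot
    have hroot_mem : ∀ v, root v ∈ S v ∧ ∀ u ∈ S v, γ u = γ (root v) → u = root v := by
      intro v
      have h := hcomp v
      simp only [hroot, hrt0, dif_pos h]
      exact h.choose_spec
    have hroot_congr : ∀ {v w : V}, G.Reachable v w → root w = root v := by
      intro v w hvw
      simp only [hroot, hS_eq hvw]
    have hroot_root : ∀ v, root (root v) = root v := fun v =>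
      hroot_congr (hroot_mem v).1
    set A : Set V := {v | v ≠ root v} with hA
    have hrtA : ∀ v ∈ A, root v ∉ A := by
      intro v hv hr
      exact hr (hroot_root v).symm
    haveI : Fintype A := Fintype.ofFinite A
    have hcardA : Fintype.card A ≤ n := by
      have h1 : Fintype.card A < Fintype.card V := by
        apply Fintype.card_lt_of_injective_of_notMem (Subtype.val : A → V)
          Subtype.val_injective (b := root hV.some)
        rintro ⟨a, ha⟩
        apply a.2
        rw [ha, hroot_root]
      omega
    obtain ⟨F', hre', hdep', hadj'⟩ := IH A (G.induce A) (fun v => γ v.val)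
      (by omega) (isCentered_induce hc A)
    have hreF : ∀ v, G.Reachable v ((extendForest F' root hrtA).parent v) := by
      intro v
      show G.Reachable v (extParent F' root v)
      by_cases h : v ∈ A
      · by_cases h0 : F'.depth ⟨v, h⟩ = 0
        · rw [extParent_of_depth_zero F' root h h0]
          exact (hroot_mem v).1
        · rw [extParent_of_depth_pos F' root h h0]
          exact induce_reachable (hre' ⟨v, h⟩)
      · rw [extParent_of_not_mem F' root h]
    have hdepF : ∀ v, (extendForest F' root hrtA).depth v + 1 ≤ (γ '' S v).ncard := by
      intro v
      show extDepth F' v + 1 ≤ _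
      by_cases h : v ∈ A
      · rw [extDepth_of_mem F' h]
        have h1 := hdep' ⟨v, h⟩
        have hsub : (fun u : A => γ u.val) '' {w | (G.induce A).Reachable ⟨v, h⟩ w}
            ⊆ (γ '' S v) \ {γ (root v)} := by
          rintro _ ⟨w, hw, rfl⟩
          have hwv : w.val ∈ S v := induce_reachable hw
          refine ⟨⟨w.val, hwv, rfl⟩, ?_⟩
          simp only [Set.mem_singleton_iff]
          intro hγ
          have heq := (hroot_mem v).2 w.val hwv hγ
          have hww : w.val ≠ root w.val := w.2
          rw [hroot_congr hwv] at hww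
          exact hww heq
        have hss : (γ '' S v) \ {γ (root v)} ⊂ γ '' S v :=
          Set.sdiff_singleton_ssubset.2 ⟨root v, (hroot_mem v).1, rfl⟩
        have h2 : ((fun u : A => γ u.val) '' {w | (G.induce A).Reachable ⟨v, h⟩ w}).ncard
            < (γ '' S v).ncard :=
          lt_of_le_of_lt (Set.ncard_le_ncard hsub (Set.toFinite _))
            (Set.ncard_lt_ncard hss (Set.toFinite _))
        omega
      · rw [extDepth_of_not_mem F' h]
        have hmem : γ v ∈ γ '' S v := ⟨v, Reachable.refl v, rfl⟩
        have hpos : 0 < (γ '' S v).ncard :=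
          (Set.ncard_pos (Set.toFinite _)).2 ⟨_, hmem⟩
        omega
    have key_anc : ∀ x y, G.Adj x y → x ∉ A →
        (extendForest F' root hrtA).Ancestor x y := by
      intro x y hxy hx
      have hxr : x = root x := not_not.1 hx
      have hrxy : root y = root x := hroot_congr hxy.reachable
      have hy : y ∈ A := by
        show y ≠ root y
        rw [hrxy, ← hxr]
        exact hxy.ne'
      refine ⟨F'.depth ⟨y, hy⟩ + 1, ?_⟩
      rw [extendForest_top F' root hrtA hy]
      set u : A := F'.parent^[F'.depth ⟨y, hy⟩] ⟨y, hy⟩ with hu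
      have hru : G.Reachable y u.val :=
        induce_reachable (F'.reachable_iterate hre' (F'.depth ⟨y, hy⟩) ⟨y, hy⟩)
      rw [hroot_congr hru, hrxy]
      exact hxr.symm
    refine ⟨extendForest F' root hrtA, hreF, hdepF, ?_⟩
    intro x y hxy
    refine ⟨hxy.ne, ?_⟩
    by_cases hx : x ∈ A
    · by_cases hy : y ∈ A
      · have hadj : (G.induce A).Adj ⟨x, hx⟩ ⟨y, hy⟩ := hxy
        obtain ⟨-, hca⟩ := hadj' _ _ hadj
        rcases hca with h | h
        · exact Or.inl (extendForest_ancestor F' root hrtA hx hy h)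
        · exact Or.inr (extendForest_ancestor F' root hrtA hy hx h)
      · exact Or.inr (key_anc y x hxy.symm hy)
    · exact Or.inl (key_anc x y hxy hx)

end Key

/-- Every `(p+1)`-centered coloring is a low tree-depth decomposition with
parameter `p`: any set `I` of at most `p` colors induces a subgraph of
tree-depth at most `|I|`. -/
theorem pCentered_low_treedepth {V C : Type*} [Fintype V] [DecidableEq C]
    (G : SimpleGraph V) (γ : V → C) (p : ℕ) (hγ : IsPCentered G γ (p + 1))
    (I : Finset C) (hI : I.card ≤ p) :
    TreedepthLE (G.induce (γ ⁻¹' ↑I)) I.card := by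
  classical
  have hcent : IsCentered (G.induce (γ ⁻¹' ↑I)) (fun v => γ v.val) := by
    intro H' hH'
    rcases hγ (liftSubgraph H') (liftSubgraph_connected H' hH') with ⟨c, h1⟩ | hbig
    · refine ⟨c, ?_⟩
      rw [lift_color_set γ H' c, Set.ncard_image_of_injective _ Subtype.val_injective] at h1
      exact h1
    · exfalso
      have hsubI : γ '' (liftSubgraph H').verts ⊆ ↑I := by
        rintro _ ⟨x, ⟨u, hu, rfl⟩, rfl⟩
        exact u.2
      have hle : (γ '' (liftSubgraph H').verts).ncard ≤ I.card := by
        rw [← Set.ncard_coe_finset]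
        exact Set.ncard_le_ncard hsubI I.finite_toSet
      omega
  haveI : Fintype (γ ⁻¹' (↑I : Set C) : Set V) := Fintype.ofFinite _
  obtain ⟨F, hre, hdep, hadj⟩ := key_forest (Fintype.card (γ ⁻¹' (↑I : Set C) : Set V)) _
    (G.induce (γ ⁻¹' ↑I)) (fun v => γ v.val) le_rfl hcent
  refine ⟨F, ?_, hadj⟩
  intro v
  refine le_trans (hdep v) ?_
  have hsub : (fun u : (γ ⁻¹' (↑I : Set C) : Set V) => γ u.val) ''
      {w | (G.induce (γ ⁻¹' ↑I)).Reachable v w} ⊆ ↑I := by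
    rintro _ ⟨w, hw, rfl⟩
    exact w.2
  rw [← Set.ncard_coe_finset]
  exact Set.ncard_le_ncard hsub I.finite_toSet
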